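/- In a loop (G,·) with identity e, the map ϖ: Φ(G,·) → N_μ(G,·) defined by ϖ(U) = eU is a group isomorphism from the group of μ-regular bijections onto the middle nucleus. -/
import Mathlib


/-- A loop: a quasigroup with two-sided identity. -/
class MyLoop (L : Type*) extends Mul L, One L where
  one_mul : ∀ a : L, 1 * a = a
  mul_one : ∀ a : L, a * 1 = a
  ldiv : L → L → L
  rdiv : L → L → L
  mul_ldiv : ∀ a b : L, a * ldiv a b = b
  ldiv_mul : ∀ a b : L, ldiv a (a * b) = b
  rdiv_mul : ∀ a b : L, rdiv a b * b = a
  mul_rdiv : ∀ a b : L, rdiv (a * b) b = a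

namespace MyLoop

variable {L : Type*} [MyLoop L]

/-- right inverse: `x * rho x = 1` -/
def rho (x : L) : L := ldiv x 1

/-- left inverse: `lam x * x = 1` -/
def lam (x : L) : L := rdiv 1 x

/-- right translation `R_a : y ↦ y * a`, as a bijection -/
def Rt (a : L) : Equiv.Perm L :=
  ⟨fun y => y * a, fun y => rdiv y a, fun y => mul_rdiv y a, fun y => rdiv_mul y a⟩

/-- left translation `L_a : y ↦ a * y`, as a bijection -/
def Lt (a : L) : Equiv.Perm L :=
  ⟨fun y => a * y, fun y => ldiv a y, fun y => ldiv_mul a y, fun y => mul_ldiv a y⟩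

/-- σ-generalized (right) Bol loop identity -/
def GBol (σ : L → L) : Prop := ∀ x y z : L, ((x * y) * z) * σ y = x * ((y * z) * σ y)

/-- σ-generalized left Bol loop identity -/
def LBol (σ : L → L) : Prop := ∀ x y z : L, σ y * (z * (y * x)) = (σ y * (z * y)) * x

/-- σ-M-loop identity -/
def MLoopP (σ : L → L) : Prop := ∀ x y z : L, (x * y) * (z * σ x) = (x * (y * z)) * σ x

/-- right inverse property -/
def RIP (L : Type*) [MyLoop L] : Prop := ∀ x y : L, (y * x) * rho x = y

/-- left inverse property -/
def LIP (L : Type*) [MyLoop L] : Prop := ∀ x y : L, lam x * (x * y) = y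

/-- right nucleus -/
def Nrho (L : Type*) [MyLoop L] : Set L := {a | ∀ y z : L, (z * y) * a = z * (y * a)}

/-- middle nucleus -/
def Nmu (L : Type*) [MyLoop L] : Set L := {a | ∀ y z : L, (z * a) * y = z * (a * y)}

/-- multiplication of the A-holomorph `H = A × L`, `(α,x)∘(β,y) = (αβ, xβ · y)` -/
def hmul (A : Subgroup (MulAut L)) (p q : ↥A × L) : ↥A × L :=
  (p.1 * q.1, (q.1 : MulAut L) p.2 * q.2)

/-- the right inverse of an element of the holomorph -/
def hrho (A : Subgroup (MulAut L)) (p : ↥A × L) : ↥A × L :=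
  (p.1⁻¹, rho ((p.1⁻¹ : MulAut L) p.2))

/-- the holomorph is a σ'-generalized Bol loop, where `σ'(α,x) = (α, σ x)` -/
def HGBol (A : Subgroup (MulAut L)) (σ : L → L) : Prop :=
  ∀ p q r : ↥A × L,
    hmul A (hmul A (hmul A p q) r) (q.1, σ q.2) =
      hmul A p (hmul A (hmul A q r) (q.1, σ q.2))

end MyLoop

open MyLoop

/-- `ϖ(U) = eU` is a group isomorphism from the group `Φ(G,·)` of
μ-regular bijections onto the middle nucleus `N_μ(G,·)` (bijective and
multiplicative, where composition in `Φ` is `U` followed by `V`). -/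
theorem mu_regular_iso_middle_nucleus {L : Type*} [MyLoop L]
    (P : Set (Equiv.Perm L))
    (hP : P = {U | ∃ U' : Equiv.Perm L, ∀ x y : L, U x * U'.symm y = x * y}) :
    Set.BijOn (fun U : Equiv.Perm L => U 1) P (Nmu L) ∧
    ∀ U ∈ P, ∀ V ∈ P, (U.trans V) 1 = U 1 * V 1 := by
  subst hP
  -- key: any U in P satisfies U x = x * U 1
  have key : ∀ U : Equiv.Perm L,
      (∃ U' : Equiv.Perm L, ∀ x y : L, U x * U'.symm y = x * y) →
      ∀ x : L, U x = x * U 1 := by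
    rintro U ⟨U', h⟩ x
    have hs : ∀ y : L, U'.symm y = ldiv (U 1) y := by
      intro y
      have h1 : U 1 * U'.symm y = y := by rw [h 1 y, MyLoop.one_mul]
      calc U'.symm y = ldiv (U 1) (U 1 * U'.symm y) := (ldiv_mul _ _).symm
        _ = ldiv (U 1) y := by rw [h1]
    have h2 : U x * U'.symm (U 1 * 1) = x * (U 1 * 1) := h x _
    rw [hs, ldiv_mul, MyLoop.mul_one, MyLoop.mul_one] at h2
    exact h2
  have mem : ∀ U : Equiv.Perm L,
      (∃ U' : Equiv.Perm L, ∀ x y : L, U x * U'.symm y = x * y) →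
      U 1 ∈ Nmu L := by
    rintro U hU y z
    obtain ⟨U', h⟩ := hU
    have hs : ∀ w : L, U'.symm w = ldiv (U 1) w := by
      intro w
      have h1 : U 1 * U'.symm w = w := by rw [h 1 w, MyLoop.one_mul]
      calc U'.symm w = ldiv (U 1) (U 1 * U'.symm w) := (ldiv_mul _ _).symm
        _ = ldiv (U 1) w := by rw [h1]
    have h2 : U z * U'.symm (U 1 * y) = z * (U 1 * y) := h z _
    rw [hs, ldiv_mul, key U ⟨U', h⟩ z] at h2
    exact h2
  refine ⟨⟨fun U hU => mem U hU, ?_, ?_⟩, ?_⟩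
  · intro U hU V hV hUV
    ext x
    simp only at hUV
    rw [key U hU x, key V hV x, hUV]
  · intro a ha
    refine ⟨⟨fun y => y * a, fun y => rdiv y a, fun y => mul_rdiv y a,
      fun y => rdiv_mul y a⟩, ⟨⟨⟨fun y => a * y, fun y => ldiv a y,
      fun y => ldiv_mul a y, fun y => mul_ldiv a y⟩, ?_⟩, ?_⟩⟩
    · intro x y
      show (x * a) * ldiv a y = x * y
      rw [ha, mul_ldiv]
    · show 1 * a = a
      exact MyLoop.one_mul a
  · intro U hU V hV
    show V (U 1) = U 1 * V 1
    rw [key V hV (U 1)]
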